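/- Let Δ₃ ⊂ ℝ² be the triangle with vertices (0,0), (9,3√3), (0,6√3), and μ the measure with density x⁴(−x/2+√3y/2)⁴(x/2+√3y/2)⁴ on Δ₃. Then the barycenter of Δ₃ with respect to μ equals (21/5, 21√3/5). -/

import Mathlib

open MeasureTheory Real

noncomputable def dens (p : ℝ × ℝ) : ℝ :=
  (p.1 * (-p.1 / 2 + Real.sqrt 3 * p.2 / 2) * (p.1 / 2 + Real.sqrt 3 * p.2 / 2)) ^ 4

lemma integral_poly (a b : ℝ) (n : ℕ) (c : ℕ → ℝ) :
    (∫ y in a..b, ∑ i ∈ Finset.range n, c i * y ^ i) =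
      ∑ i ∈ Finset.range n, c i * (b ^ (i+1) - a ^ (i+1)) / ((i : ℝ)+1) := by
  rw [intervalIntegral.integral_finset_sum
    (f := fun i y => c i * y ^ i) (fun i _ => (continuous_const.mul (continuous_pow i)).intervalIntegrable _ _)]
  refine Finset.sum_congr rfl fun i _ => ?_
  rw [intervalIntegral.integral_const_mul, integral_pow]
  ring

lemma ipoly15 (a b c0 c1 c2 c3 c4 c5 c6 c7 c8 c9 c10 c11 c12 c13 c14 : ℝ) :
    (∫ y in a..b, (c0 + c1*y + c2*y^2 + c3*y^3 + c4*y^4 + c5*y^5 + c6*y^6 + c7*y^7 + c8*y^8 + c9*y^9 + c10*y^10 + c11*y^11 + c12*y^12 + c13*y^13 + c14*y^14)) = c0*(b-a) + c1*(b^2-a^2)/2 + c2*(b^3-a^3)/3 + c3*(b^4-a^4)/4 + c4*(b^5-a^5)/5 + c5*(b^6-a^6)/6 + c6*(b^7-a^7)/7 + c7*(b^8-a^8)/8 + c8*(b^9-a^9)/9 + c9*(b^10-a^10)/10 + c10*(b^11-a^11)/11 + c11*(b^12-a^12)/12 + c12*(b^13-a^13)/13 + c13*(b^14-a^14)/14 +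 c14*(b^15-a^15)/15 := by
  rw [intervalIntegral.integral_congr
    (g := fun y : ℝ => ∑ i ∈ Finset.range 15, (fun i => if i = 0 then c0 else if i = 1 then c1 else if i = 2 then c2 else if i = 3 then c3 else if i = 4 then c4 else if i = 5 then c5 else if i = 6 then c6 else if i = 7 then c7 else if i = 8 then c8 else if i = 9 then c9 else if i = 10 then c10 else if i = 11 then c11 else if i = 12 then c12 else if i = 13 then c13 else if i = 14 then c14 else 0) i * y ^ i)
    (fun y _ => by norm_num [Finset.sum_range_succ]; try ring), integral_poly]
  norm_num [Finset.sum_range_succ]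
  try ring

def Tri : Set (ℝ × ℝ) :=
  {p | 0 ≤ p.1 ∧ p.1 ≤ 9 ∧ Real.sqrt 3/3*p.1 ≤ p.2 ∧ p.2 ≤ 6*Real.sqrt 3 - Real.sqrt 3/3*p.1}

lemma isClosed_Tri : IsClosed Tri := by
  have h1 : IsClosed {p : ℝ × ℝ | 0 ≤ p.1} := isClosed_le continuous_const continuous_fst
  have h2 : IsClosed {p : ℝ × ℝ | p.1 ≤ 9} := isClosed_le continuous_fst continuous_const
  have h3 : IsClosed {p : ℝ × ℝ | Real.sqrt 3/3*p.1 ≤ p.2} :=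
    isClosed_le (continuous_const.mul continuous_fst) continuous_snd
  have h4 : IsClosed {p : ℝ × ℝ | p.2 ≤ 6*Real.sqrt 3 - Real.sqrt 3/3*p.1} :=
    isClosed_le continuous_snd (continuous_const.sub (continuous_const.mul continuous_fst))
  exact h1.inter (h2.inter (h3.inter h4))

lemma hull_eq :
    (convexHull ℝ {((0:ℝ), (0:ℝ)), (9, 3 * Real.sqrt 3), (0, 6 * Real.sqrt 3)} : Set (ℝ × ℝ)) = Tri := by
  have hs : Real.sqrt 3 ^ 2 = 3 := Real.sq_sqrt (by norm_num)
  have hpos : (0:ℝ) < Real.sqrt 3 := Real.sqrt_pos.2 (by norm_num)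
  apply le_antisymm
  · apply convexHull_min
    · intro p hp
      rcases hp with h | h | h <;> subst h <;>
        refine ⟨by norm_num, by norm_num, by nlinarith [Real.sqrt_nonneg 3], by nlinarith [Real.sqrt_nonneg 3]⟩
    · rintro ⟨px, py⟩ ⟨h1, h2, h3, h4⟩ ⟨qx, qy⟩ ⟨g1, g2, g3, g4⟩ a c ha hc hac
      refine ⟨?_, ?_, ?_, ?_⟩ <;>
        simp only [Prod.smul_fst, Prod.smul_snd, Prod.fst_add, Prod.snd_add, smul_eq_mul] <;>
        nlinarith
  · rintro ⟨px, py⟩ ⟨h1, h2, h3, h4⟩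
    have h6 : (0:ℝ) < 6 * Real.sqrt 3 := by positivity
    set w : Fin 3 → ℝ := ![1 - px/9 - (py - Real.sqrt 3/3*px)/(6*Real.sqrt 3), px/9,
      (py - Real.sqrt 3/3*px)/(6*Real.sqrt 3)] with hw
    set z : Fin 3 → ℝ × ℝ := ![((0:ℝ), (0:ℝ)), (9, 3 * Real.sqrt 3), (0, 6 * Real.sqrt 3)] with hz
    have hcm := Finset.centerMass_mem_convexHull (Finset.univ : Finset (Fin 3))
      (w := w) (z := z) ?_ ?_ ?_ (s := {((0:ℝ), (0:ℝ)), (9, 3 * Real.sqrt 3), (0, 6 * Real.sqrt 3)})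
    · have hsum : ∑ i, w i = 1 := by simp [hw, Fin.sum_univ_three]; ring
      have : Finset.univ.centerMass w z = (px, py) := by
        rw [Finset.centerMass, hsum, inv_one, one_smul, Fin.sum_univ_three]
        simp only [hw, hz, Matrix.cons_val_zero, Matrix.cons_val_one, Matrix.head_cons,
          Matrix.cons_val_two, Matrix.tail_cons, Prod.smul_mk, smul_eq_mul]
        refine Prod.ext ?_ ?_ <;> simp <;> field_simp <;> ring
      rwa [this] at hcm
    · intro i _
      fin_cases i
      · show (0:ℝ) ≤ 1 - px/9 - (py - Real.sqrt 3/3*px)/(6*Real.sqrt 3)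
        have hb : (py - Real.sqrt 3/3*px)/(6*Real.sqrt 3) ≤ 1 - px/9 := by
          rw [div_le_iff₀ h6]; nlinarith
        linarith
      · show (0:ℝ) ≤ px/9
        have h1' : (0:ℝ) ≤ px := h1
        positivity
      · show (0:ℝ) ≤ (py - Real.sqrt 3/3*px)/(6*Real.sqrt 3)
        exact div_nonneg (by nlinarith) h6.le
    · have hb : (py - Real.sqrt 3/3*px)/(6*Real.sqrt 3) ≤ 1 - px/9 := by
        rw [div_le_iff₀ h6]; nlinarith
      have hc : 0 ≤ px/9 := by
        have h1' : (0:ℝ) ≤ px := h1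
        positivity
      have hd : 0 ≤ (py - Real.sqrt 3/3*px)/(6*Real.sqrt 3) := div_nonneg (by nlinarith) h6.le
      rw [Fin.sum_univ_three]
      simp only [hw, Matrix.cons_val_zero, Matrix.cons_val_one, Matrix.head_cons,
        Matrix.cons_val_two, Matrix.tail_cons]
      linarith
    · intro i _; fin_cases i <;> norm_num [hz]

lemma isCompact_Tri : IsCompact Tri := by
  rw [← hull_eq]
  exact Set.Finite.isCompact_convexHull (𝕜 := ℝ) (Set.toFinite _)

lemma fubini (f : ℝ × ℝ → ℝ) (hf : Continuous f) :
    (∫ p in Tri, f p) =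
      ∫ x in (0:ℝ)..9, ∫ y in (Real.sqrt 3/3*x)..(6*Real.sqrt 3 - Real.sqrt 3/3*x), f (x, y) := by
  have hm : MeasurableSet Tri := isClosed_Tri.measurableSet
  have hint : IntegrableOn f Tri := hf.continuousOn.integrableOn_compact isCompact_Tri
  have hind : Integrable (Tri.indicator f) ((volume : Measure ℝ).prod volume) := by
    rw [← MeasureTheory.Measure.volume_eq_prod]
    exact (integrable_indicator_iff hm).2 hint
  have key : ∀ x : ℝ, (∫ y, Tri.indicator f (x, y)) =
      (Set.Icc (0:ℝ) 9).indicator (fun x => ∫ y in (Real.sqrt 3/3*x)..(6*Real.sqrt 3 - Real.sqrt 3/3*x), f (x, y)) x := by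
    intro x
    by_cases hx : 0 ≤ x ∧ x ≤ 9
    · have hab : Real.sqrt 3/3*x ≤ 6*Real.sqrt 3 - Real.sqrt 3/3*x := by
        nlinarith [Real.sqrt_nonneg 3, hx.1, hx.2]
      have heq : (fun y => Tri.indicator f (x, y)) =
          (Set.Icc (Real.sqrt 3/3*x) (6*Real.sqrt 3 - Real.sqrt 3/3*x)).indicator
            (fun y => f (x, y)) := by
        funext y
        by_cases hy : Real.sqrt 3/3*x ≤ y ∧ y ≤ 6*Real.sqrt 3 - Real.sqrt 3/3*x
        · rw [Set.indicator_of_mem (show (x, y) ∈ Tri from ⟨hx.1, hx.2, hy.1, hy.2⟩),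
            Set.indicator_of_mem (Set.mem_Icc.2 hy)]
        · rw [Set.indicator_of_notMem (fun h => hy ⟨h.2.2.1, h.2.2.2⟩),
            Set.indicator_of_notMem (fun h => hy (Set.mem_Icc.1 h))]
      rw [heq, MeasureTheory.integral_indicator measurableSet_Icc,
        MeasureTheory.integral_Icc_eq_integral_Ioc, ← intervalIntegral.integral_of_le hab,
        Set.indicator_of_mem (Set.mem_Icc.2 hx)]
    · rw [Set.indicator_of_notMem (fun h => hx (Set.mem_Icc.1 h))]
      have : ∀ y : ℝ, Tri.indicator f (x, y) = 0 :=
        fun y => Set.indicator_of_notMem (fun h => hx ⟨h.1, h.2.1⟩) _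
      simp only [this, integral_zero]
  rw [← MeasureTheory.integral_indicator hm, MeasureTheory.Measure.volume_eq_prod,
    MeasureTheory.integral_prod _ hind]
  calc (∫ x, ∫ y, Tri.indicator f (x, y)) 
      = ∫ x, (Set.Icc (0:ℝ) 9).indicator (fun x => ∫ y in (Real.sqrt 3/3*x)..(6*Real.sqrt 3 - Real.sqrt 3/3*x), f (x, y)) x :=
        integral_congr_ae (Filter.Eventually.of_forall key)
    _ = ∫ x in Set.Icc (0:ℝ) 9, ∫ y in (Real.sqrt 3/3*x)..(6*Real.sqrt 3 - Real.sqrt 3/3*x), f (x, y) :=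
        MeasureTheory.integral_indicator measurableSet_Icc
    _ = _ := by
        rw [MeasureTheory.integral_Icc_eq_integral_Ioc,
          ← intervalIntegral.integral_of_le (by norm_num : (0:ℝ) ≤ 9)]

lemma M_val : (∫ p in Tri, dens p) = Real.sqrt 3 * (847288609443/490) := by
  have hs : Real.sqrt 3 ^ 2 = 3 := Real.sq_sqrt (by norm_num)
  have hinner : ∀ x : ℝ, (∫ y in (Real.sqrt 3/3*x)..(6*Real.sqrt 3 - Real.sqrt 3/3*x), dens (x, y)) = Real.sqrt 3 * (0 + 0*x + 0*x^2 + 0*x^3 + 28697814*x^4 + (-14348907)*x^5 + (19131876/7)*x^6 + (-236196)*x^7 + (39366/5)*x^8 + 0*x^9 + 0*x^10 + 0*x^11 + 0*x^12 + (-1/945)*x^13 + 0*x^14) := by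
    intro x
    rw [intervalIntegral.integral_congr (g := fun y : ℝ => (((1/256)*x^12) + 0*y + ((-3/64)*x^10)*y^2 + 0*y^3 + ((27/128)*x^8)*y^4 + 0*y^5 + ((-27/64)*x^6)*y^6 + 0*y^7 + ((81/256)*x^4)*y^8 + 0*y^9 + 0*y^10 + 0*y^11 + 0*y^12 + 0*y^13 + 0*y^14))
      (fun y _ => by simp only [dens]; linear_combination ((27/256)*x^4*y^8 + (9/256)*x^4*y^8*Real.sqrt 3^2 + (3/256)*x^4*y^8*Real.sqrt 3^4 + (1/256)*x^4*y^8*Real.sqrt 3^6 + (-9/64)*x^6*y^6 + (-3/64)*x^6*y^6*Real.sqrt 3^2 + (-1/64)*x^6*y^6*Real.sqrt 3^4 + (9/128)*x^8*y^4 + (3/128)*x^8*y^4*Real.sqrt 3^2 + (-1/64)*x^10*y^2) * hs), ipoly15]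
    linear_combination (9565938*x^4*Real.sqrt 3 + 3188646*x^4*Real.sqrt 3^3 + 1062882*x^4*Real.sqrt 3^5 + 354294*x^4*Real.sqrt 3^7 + (-4782969)*x^5*Real.sqrt 3 + (-1594323)*x^5*Real.sqrt 3^3 + (-531441)*x^5*Real.sqrt 3^5 + (-177147)*x^5*Real.sqrt 3^7 + (6377292/7)*x^6*Real.sqrt 3 + (2125764/7)*x^6*Real.sqrt 3^3 + (708588/7)*x^6*Real.sqrt 3^5 + 39366*x^6*Real.sqrt 3^7 + (-78732)*x^7*Real.sqrt 3 + (-26244)*x^7*Real.sqrt 3^3 + (-8748)*x^7*Real.sqrt 3^5 + (-5103)*x^7*Real.sqrt 3^7 + (13122/5)*x^8*Real.sqrt 3 + (4374/5)*x^8*Real.sqrt 3^3 + (729/4)*x^8*Real.sqrt 3^5 + (1701/4)*x^8*Real.sqrt 3^7 + (243/8)*x^9*Real.sqrt 3^5 + (-189/8)*x^9*Real.sqrt 3^7 + (9/8)*x^10*Real.sqrt 3^3 + (-3)*x^10*Real.sqrt 3^5 + (7/8)*x^10*Real.sqrt 3^7 + (-3/16)*x^11*Real.sqrt 3^3 + (1/8)*x^11*Real.sqrt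 3^5 + (-1/48)*x^11*Real.sqrt 3^7 + (-1/128)*x^12*Real.sqrt 3 + (1/128)*x^12*Real.sqrt 3^3 + (-1/384)*x^12*Real.sqrt 3^5 + (1/3456)*x^12*Real.sqrt 3^7 + (187/362880)*x^13*Real.sqrt 3 + (-233/1088640)*x^13*Real.sqrt 3^3 + (29/653184)*x^13*Real.sqrt 3^5 + (-1/279936)*x^13*Real.sqrt 3^7) * hs
  rw [fubini _ (by unfold dens; fun_prop)]
  rw [intervalIntegral.integral_congr (g := fun x : ℝ => Real.sqrt 3 * (0 + 0*x + 0*x^2 + 0*x^3 + 28697814*x^4 + (-14348907)*x^5 + (19131876/7)*x^6 + (-236196)*x^7 + (39366/5)*x^8 + 0*x^9 + 0*x^10 + 0*x^11 + 0*x^12 + (-1/945)*x^13 + 0*x^14)) (fun x _ => hinner x)]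
  rw [intervalIntegral.integral_const_mul, ipoly15]
  norm_num

lemma Mx_val : (∫ p in Tri, dens p * p.1) = Real.sqrt 3 * (2541865828329/350) := by
  have hs : Real.sqrt 3 ^ 2 = 3 := Real.sq_sqrt (by norm_num)
  have hinner : ∀ x : ℝ, (∫ y in (Real.sqrt 3/3*x)..(6*Real.sqrt 3 - Real.sqrt 3/3*x), dens (x, y) * (x, y).1) = Real.sqrt 3 * (0 + 0*x + 0*x^2 + 0*x^3 + 0*x^4 + 28697814*x^5 + (-14348907)*x^6 + (19131876/7)*x^7 + (-236196)*x^8 + (39366/5)*x^9 + 0*x^10 + 0*x^11 + 0*x^12 + 0*x^13 + (-1/945)*x^14) := by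
    intro x
    rw [intervalIntegral.integral_congr (g := fun y : ℝ => (((1/256)*x^13) + 0*y + ((-3/64)*x^11)*y^2 + 0*y^3 + ((27/128)*x^9)*y^4 + 0*y^5 + ((-27/64)*x^7)*y^6 + 0*y^7 + ((81/256)*x^5)*y^8 + 0*y^9 + 0*y^10 + 0*y^11 + 0*y^12 + 0*y^13 + 0*y^14))
      (fun y _ => by simp only [dens]; linear_combination ((27/256)*x^5*y^8 + (9/256)*x^5*y^8*Real.sqrt 3^2 + (3/256)*x^5*y^8*Real.sqrt 3^4 + (1/256)*x^5*y^8*Real.sqrt 3^6 + (-9/64)*x^7*y^6 + (-3/64)*x^7*y^6*Real.sqrt 3^2 + (-1/64)*x^7*y^6*Real.sqrt 3^4 + (9/128)*x^9*y^4 + (3/128)*x^9*y^4*Real.sqrt 3^2 + (-1/64)*x^11*y^2) * hs), ipoly15]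
    linear_combination (9565938*x^5*Real.sqrt 3 + 3188646*x^5*Real.sqrt 3^3 + 1062882*x^5*Real.sqrt 3^5 + 354294*x^5*Real.sqrt 3^7 + (-4782969)*x^6*Real.sqrt 3 + (-1594323)*x^6*Real.sqrt 3^3 + (-531441)*x^6*Real.sqrt 3^5 + (-177147)*x^6*Real.sqrt 3^7 + (6377292/7)*x^7*Real.sqrt 3 + (2125764/7)*x^7*Real.sqrt 3^3 + (708588/7)*x^7*Real.sqrt 3^5 + 39366*x^7*Real.sqrt 3^7 + (-78732)*x^8*Real.sqrt 3 + (-26244)*x^8*Real.sqrt 3^3 + (-8748)*x^8*Real.sqrt 3^5 + (-5103)*x^8*Real.sqrt 3^7 + (13122/5)*x^9*Real.sqrt 3 + (4374/5)*x^9*Real.sqrt 3^3 + (729/4)*x^9*Real.sqrt 3^5 + (1701/4)*x^9*Real.sqrt 3^7 + (243/8)*x^10*Real.sqrt 3^5 + (-189/8)*x^10*Real.sqrt 3^7 + (9/8)*x^11*Real.sqrt 3^3 + (-3)*x^11*Real.sqrt 3^5 + (7/8)*x^11*Real.sqrt 3^7 + (-3/16)*x^12*Real.sqrt 3^3 + (1/8)*x^12*Real.sqrt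 3^5 + (-1/48)*x^12*Real.sqrt 3^7 + (-1/128)*x^13*Real.sqrt 3 + (1/128)*x^13*Real.sqrt 3^3 + (-1/384)*x^13*Real.sqrt 3^5 + (1/3456)*x^13*Real.sqrt 3^7 + (187/362880)*x^14*Real.sqrt 3 + (-233/1088640)*x^14*Real.sqrt 3^3 + (29/653184)*x^14*Real.sqrt 3^5 + (-1/279936)*x^14*Real.sqrt 3^7) * hs
  rw [fubini _ (by unfold dens; fun_prop)]
  rw [intervalIntegral.integral_congr (g := fun x : ℝ => Real.sqrt 3 * (0 + 0*x + 0*x^2 + 0*x^3 + 0*x^4 + 28697814*x^5 + (-14348907)*x^6 + (19131876/7)*x^7 + (-236196)*x^8 + (39366/5)*x^9 + 0*x^10 + 0*x^11 + 0*x^12 + 0*x^13 + (-1/945)*x^14)) (fun x _ => hinner x)]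
  rw [intervalIntegral.integral_const_mul, ipoly15]
  norm_num

lemma My_val : (∫ p in Tri, dens p * p.2) = (7625597484987/350) := by
  have hs : Real.sqrt 3 ^ 2 = 3 := Real.sq_sqrt (by norm_num)
  have hinner : ∀ x : ℝ, (∫ y in (Real.sqrt 3/3*x)..(6*Real.sqrt 3 - Real.sqrt 3/3*x), dens (x, y) * (x, y).2) = (0 + 0*x + 0*x^2 + 0*x^3 + (2324522934/5)*x^4 + (-258280326)*x^5 + 57395628*x^6 + (-6377292)*x^7 + 354294*x^8 + (-39366/5)*x^9 + 0*x^10 + 0*x^11 + 0*x^12 + 0*x^13 + 0*x^14) := by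
    intro x
    rw [intervalIntegral.integral_congr (g := fun y : ℝ => (0 + ((1/256)*x^12)*y + 0*y^2 + ((-3/64)*x^10)*y^3 + 0*y^4 + ((27/128)*x^8)*y^5 + 0*y^6 + ((-27/64)*x^6)*y^7 + 0*y^8 + ((81/256)*x^4)*y^9 + 0*y^10 + 0*y^11 + 0*y^12 + 0*y^13 + 0*y^14))
      (fun y _ => by simp only [dens]; linear_combination ((27/256)*x^4*y^9 + (9/256)*x^4*y^9*Real.sqrt 3^2 + (3/256)*x^4*y^9*Real.sqrt 3^4 + (1/256)*x^4*y^9*Real.sqrt 3^6 + (-9/64)*x^6*y^7 + (-3/64)*x^6*y^7*Real.sqrt 3^2 + (-1/64)*x^6*y^7*Real.sqrt 3^4 + (9/128)*x^8*y^5 + (3/128)*x^8*y^5*Real.sqrt 3^2 + (-1/64)*x^10*y^3) * hs), ipoly15]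
    linear_combination ((774840978/5)*x^4 + (258280326/5)*x^4*Real.sqrt 3^2 + (86093442/5)*x^4*Real.sqrt 3^4 + (28697814/5)*x^4*Real.sqrt 3^6 + (9565938/5)*x^4*Real.sqrt 3^8 + (-86093442)*x^5 + (-28697814)*x^5*Real.sqrt 3^2 + (-9565938)*x^5*Real.sqrt 3^4 + (-3188646)*x^5*Real.sqrt 3^6 + (-1062882)*x^5*Real.sqrt 3^8 + 19131876*x^6 + 6377292*x^6*Real.sqrt 3^2 + 2125764*x^6*Real.sqrt 3^4 + 708588*x^6*Real.sqrt 3^6 + (531441/2)*x^6*Real.sqrt 3^8 + (-2125764)*x^7 + (-708588)*x^7*Real.sqrt 3^2 + (-236196)*x^7*Real.sqrt 3^4 + (-78732)*x^7*Real.sqrt 3^6 + (-39366)*x^7*Real.sqrt 3^8 + 118098*x^8 + 39366*x^8*Real.sqrt 3^2 + 13122*x^8*Real.sqrt 3^4 + (15309/4)*x^8*Real.sqrt 3^6 + (15309/4)*x^8*Real.sqrt 3^8 + (-13122/5)*x^9 + (-4374/5)*x^9*Real.sqrt 3^2 + (-1458/5)*x^9*Real.sqrt 3^4 + (1701/20)*x^9*Real.sqrt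 3^6 + (-5103/20)*x^9*Real.sqrt 3^8 + (81/16)*x^10*Real.sqrt 3^4 + (-189/8)*x^10*Real.sqrt 3^6 + (189/16)*x^10*Real.sqrt 3^8 + (-9/8)*x^11*Real.sqrt 3^4 + (3/2)*x^11*Real.sqrt 3^6 + (-3/8)*x^11*Real.sqrt 3^8 + (-3/128)*x^12*Real.sqrt 3^2 + (11/128)*x^12*Real.sqrt 3^4 + (-19/384)*x^12*Real.sqrt 3^6 + (1/128)*x^12*Real.sqrt 3^8 + (1/384)*x^13*Real.sqrt 3^2 + (-1/384)*x^13*Real.sqrt 3^4 + (1/1152)*x^13*Real.sqrt 3^6 + (-1/10368)*x^13*Real.sqrt 3^8) * hs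
  rw [fubini _ (by unfold dens; fun_prop)]
  rw [intervalIntegral.integral_congr (g := fun x : ℝ => (0 + 0*x + 0*x^2 + 0*x^3 + (2324522934/5)*x^4 + (-258280326)*x^5 + 57395628*x^6 + (-6377292)*x^7 + 354294*x^8 + (-39366/5)*x^9 + 0*x^10 + 0*x^11 + 0*x^12 + 0*x^13 + 0*x^14)) (fun x _ => hinner x)]
  rw [ipoly15]
  norm_num

theorem stmt :
    (∫ p in (convexHull ℝ {((0:ℝ), (0:ℝ)), (9, 3 * Real.sqrt 3), (0, 6 * Real.sqrt 3)} : Set (ℝ × ℝ)), dens p ∂volume)⁻¹ •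
      (∫ p in (convexHull ℝ {((0:ℝ), (0:ℝ)), (9, 3 * Real.sqrt 3), (0, 6 * Real.sqrt 3)} : Set (ℝ × ℝ)), dens p • p ∂volume) = ((21/5 : ℝ), (21 * Real.sqrt 3 / 5 : ℝ)) := by
  have hs : Real.sqrt 3 ^ 2 = 3 := Real.sq_sqrt (by norm_num)
  have hs0 : Real.sqrt 3 ≠ 0 := by positivity
  rw [hull_eq]
  have hint : IntegrableOn (fun p : ℝ × ℝ => dens p • p) Tri :=
    ((by unfold dens; fun_prop : Continuous fun p : ℝ × ℝ => dens p • p)).continuousOn.integrableOn_compact isCompact_Tri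
  have h1 : (∫ p in Tri, dens p • p) = ((∫ p in Tri, dens p * p.1), (∫ p in Tri, dens p * p.2)) := by
    refine Prod.ext ?_ ?_
    · have e1 := (ContinuousLinearMap.fst ℝ ℝ ℝ).integral_comp_comm hint
      simpa [smul_eq_mul] using e1.symm
    · have e2 := (ContinuousLinearMap.snd ℝ ℝ ℝ).integral_comp_comm hint
      simpa [smul_eq_mul] using e2.symm
  rw [h1, M_val, Mx_val, My_val, Prod.smul_mk]
  refine Prod.ext ?_ ?_ <;> simp only [smul_eq_mul]
  · rw [mul_inv]
    field_simp
    ring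
  · rw [mul_inv]
    field_simp
    linear_combination (-6227571279406050 : ℝ) * hs
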